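/- arXiv:1012.1181 — 3 statements merged into one kernel-verified Lean document; each statement's English description precedes it below -/
import Mathlib

section
/- Let f be a smooth solution of the Tanno equation with constant c on a pseudo-Riemannian Kähler manifold, and let γ: ℝ → M be a complete lightlike (null) geodesic. Then the function t ↦ f(γ(t)) satisfies the ODE (f∘γ)'''(t) = 0, so f∘γ is a polynomial of degree at most 2 in t. -/
open scoped BigOperators

noncomputable section

/-- An abstract axiomatization of a pseudo-Riemannian Kähler manifold of real
dimension `2n`, given by index-notation tensor data: a metric `g`, its inverse
`ginv`, a complex structure `J` (with upper-lower indices `J^i_j`), and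
covariant-derivative operators `D0`, `D1`, `D2` (the Levi-Civita connection
acting on functions, 1-tensors and 2-tensors respectively). -/
structure KahlerSetting (n : ℕ) where
  M : Type
  topM : TopologicalSpace M
  g : M → Fin (2*n) → Fin (2*n) → ℝ
  ginv : M → Fin (2*n) → Fin (2*n) → ℝ
  J : M → Fin (2*n) → Fin (2*n) → ℝ
  D0 : (M → ℝ) → (M → Fin (2*n) → ℝ)
  D1 : (M → Fin (2*n) → ℝ) → (M → Fin (2*n) → Fin (2*n) → ℝ)
  D2 : (M → Fin (2*n) → Fin (2*n) → ℝ) → (M → Fin (2*n) → Fin (2*n) → Fin (2*n) → ℝ)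
  g_symm : ∀ x i j, g x i j = g x j i
  ginv_symm : ∀ x i j, ginv x i j = ginv x j i
  ginv_g : ∀ x i j, (∑ k, ginv x i k * g x k j) = if i = j then (1:ℝ) else 0
  J_sq : ∀ x i j, (∑ k, J x i k * J x k j) = if i = j then (-1:ℝ) else 0
  J_herm : ∀ x i j, (∑ k, ∑ l, g x k l * J x k i * J x l j) = g x i j
  D0_add : ∀ f h x i, D0 (fun y => f y + h y) x i = D0 f x i + D0 h x i
  D0_smul : ∀ (c : ℝ) f x i, D0 (fun y => c * f y) x i = c * D0 f x i
  D0_const : ∀ (c : ℝ) x i, D0 (fun _ => c) x i = 0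
  Dg_zero : ∀ x i j k, D2 g x i j k = 0
  DKform_zero : ∀ x i j k, D2 (fun y a b => ∑ c, g y a c * J y c b) x i j k = 0
  Hess_symm : ∀ f x i j, D1 (D0 f) x i j = D1 (D0 f) x j i

namespace KahlerSetting

variable {n : ℕ} (S : KahlerSetting n)

instance : TopologicalSpace S.M := S.topM

/-- The Kähler 2-form `J_{ij} = g_{iα} J^α_j`. -/
def Jl (x : S.M) (i j : Fin (2*n)) : ℝ := ∑ c, S.g x i c * S.J x c j

/-- `f̄_i = J^α_i f_{,α}`. -/
def fbar (f : S.M → ℝ) (x : S.M) (i : Fin (2*n)) : ℝ := ∑ a, S.J x a i * S.D0 f x a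

/-- The Hessian `f_{,ij}`. -/
def Hess (f : S.M → ℝ) : S.M → Fin (2*n) → Fin (2*n) → ℝ := S.D1 (S.D0 f)

/-- The third covariant derivative `f_{,ijk}`. -/
def T3 (f : S.M → ℝ) : S.M → Fin (2*n) → Fin (2*n) → Fin (2*n) → ℝ :=
  S.D2 (S.D1 (S.D0 f))

/-- The Tanno equation
`f_{,ijk} + c (2 f_{,k} g_{ij} + f_{,i} g_{jk} + f_{,j} g_{ik} - f̄_{,i} J_{jk} - f̄_{,j} J_{ik}) = 0`. -/
def IsTannoSol (c : ℝ) (f : S.M → ℝ) : Prop :=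
  ∀ x i j k,
    S.T3 f x i j k + c * (2 * S.D0 f x k * S.g x i j + S.D0 f x i * S.g x j k
      + S.D0 f x j * S.g x i k - S.fbar f x i * S.Jl x j k - S.fbar f x j * S.Jl x i k) = 0

/-- Raising an index with `g^{ij}`. -/
def raise1 (x : S.M) (ω : Fin (2*n) → ℝ) (i : Fin (2*n)) : ℝ := ∑ a, S.ginv x i a * ω a

/-- `a_{ij} := -f_{,ij} - 2 f g_{ij}`. -/
def aT (f : S.M → ℝ) (x : S.M) (i j : Fin (2*n)) : ℝ :=
  -(S.Hess f x i j) - 2 * f x * S.g x i j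

/-- `a^i_j = g^{iα} a_{αj}`. -/
def aUp (f : S.M → ℝ) (x : S.M) (i j : Fin (2*n)) : ℝ := ∑ a, S.ginv x i a * S.aT f x a j

/-- `μ := -2 f`. -/
def muF (f : S.M → ℝ) (x : S.M) : ℝ := -2 * f x

/-- The linear Frobenius-type system
`a_{ij,k} = f_i g_{jk} + f_j g_{ik} - f̄_i J_{jk} - f̄_j J_{ik}`,
`f_{i,j} = μ g_{ij} - a_{ij}`, `μ_{,i} = -2 f_i`. -/
def IsFrobSol (a : S.M → Fin (2*n) → Fin (2*n) → ℝ) (fi : S.M → Fin (2*n) → ℝ)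
    (μ : S.M → ℝ) : Prop :=
  (∀ x i j k, S.D2 a x i j k = fi x i * S.g x j k + fi x j * S.g x i k
      - (∑ c, S.J x c i * fi x c) * S.Jl x j k - (∑ c, S.J x c j * fi x c) * S.Jl x i k)
  ∧ (∀ x i j, S.D1 fi x i j = μ x * S.g x i j - a x i j)
  ∧ (∀ x i, S.D0 μ x i = -2 * fi x i)

/-- The product `F*H := -2 F H - (1/2) F_{,α} H^{,α}`. -/
def starProd (F H : S.M → ℝ) (x : S.M) : ℝ :=
  -2 * F x * H x - (1/2) * ∑ i, ∑ j, S.ginv x i j * S.D0 F x i * S.D0 H x j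

/-- The `k`-fold `*`-power of `f`; `f^{*0}` is the constant `-1/2`
(corresponding to the identity matrix `L(-1/2) = 1`). -/
def starPow (f : S.M → ℝ) : ℕ → S.M → ℝ
  | 0 => fun _ => -(1/2)
  | (k+1) => S.starProd f (starPow f k)

/-- The extended `(2n+2)×(2n+2)` matrix `L(f)` with blocks `(μ·Id₂, f_j/f̄_j ; f^i/f̄^i, a^i_j)`. -/
def Lmat (f : S.M → ℝ) (x : S.M) :
    Matrix (Fin 2 ⊕ Fin (2*n)) (Fin 2 ⊕ Fin (2*n)) ℝ :=
  Matrix.fromBlocks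
    (Matrix.of fun i j => if i = j then S.muF f x else 0)
    (Matrix.of fun i j => if i = (0 : Fin 2) then S.D0 f x j else S.fbar f x j)
    (Matrix.of fun i j => if j = (0 : Fin 2) then S.raise1 x (S.D0 f x) i
      else S.raise1 x (S.fbar f x) i)
    (Matrix.of fun i j => S.aUp f x i j)

/-- The extended manifold `M̂ = ℝ² × M`. -/
abbrev Mhat : Type := (ℝ × ℝ) × S.M

/-- `L(f)` as a field on `M̂` (its entries do not depend on the `ℝ²` coordinates). -/
def Lhat (f : S.M → ℝ) (p : S.Mhat) :
    Matrix (Fin 2 ⊕ Fin (2*n)) (Fin 2 ⊕ Fin (2*n)) ℝ :=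
  S.Lmat f p.2

/-- `a^i_j` at a point, as an endomorphism of `T_pM ≅ ℝ^{2n}`. -/
def aEnd (f : S.M → ℝ) (p : S.M) : Module.End ℝ (Fin (2*n) → ℝ) :=
  Matrix.toLin' (Matrix.of fun i j => S.aUp f p i j)

/-- `L(f)` at a point, as an endomorphism of `T_{(0,0,p)}M̂ ≅ ℝ^{2n+2}`. -/
def LEnd (f : S.M → ℝ) (p : S.M) : Module.End ℝ ((Fin 2 ⊕ Fin (2*n)) → ℝ) :=
  Matrix.toLin' (S.Lmat f p)

end KahlerSetting

/-- The embedding `T_pM ↪ T_{(0,0,p)}M̂` as vectors with vanishing `ℝ²`-components. -/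
def tangentEmb (n : ℕ) : (Fin (2*n) → ℝ) →ₗ[ℝ] ((Fin 2 ⊕ Fin (2*n)) → ℝ) where
  toFun v := Sum.elim (fun _ => 0) v
  map_add' u v := by funext i; cases i <;> simp
  map_smul' c v := by funext i; cases i <;> simp


section AuxTriple

lemma trip_first0 {m : ℕ} (r : ℝ) (F w : Fin m → ℝ) (P : Fin m → Fin m → ℝ)
    (h : ∑ i, ∑ j, P i j * w i * w j = 0) :
    ∑ i, ∑ j, ∑ k, r * (F i * w i) * (P j k * w j * w k) = 0 := by
  apply Finset.sum_eq_zero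
  intro i _
  have : ∑ j, ∑ k, r * (F i * w i) * (P j k * w j * w k)
      = (r * (F i * w i)) * ∑ j, ∑ k, P j k * w j * w k := by
    simp only [Finset.mul_sum]
  rw [this, h, mul_zero]

lemma trip_mid0 {m : ℕ} (r : ℝ) (F w : Fin m → ℝ) (P : Fin m → Fin m → ℝ)
    (h : ∑ i, ∑ j, P i j * w i * w j = 0) :
    ∑ i, ∑ j, ∑ k, r * (F j * w j) * (P i k * w i * w k) = 0 := by
  rw [Finset.sum_comm]
  exact trip_first0 r F w P h

lemma trip_outer0 {m : ℕ} (r : ℝ) (F w : Fin m → ℝ) (P : Fin m → Fin m → ℝ)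
    (h : ∑ i, ∑ j, P i j * w i * w j = 0) :
    ∑ i, ∑ j, ∑ k, r * (F k * w k) * (P i j * w i * w j) = 0 := by
  have step : ∀ i : Fin m, ∑ j, ∑ k, r * (F k * w k) * (P i j * w i * w j)
      = ∑ k, ∑ j, r * (F k * w k) * (P i j * w i * w j) := fun i => Finset.sum_comm
  calc ∑ i, ∑ j, ∑ k, r * (F k * w k) * (P i j * w i * w j)
      = ∑ i, ∑ k, ∑ j, r * (F k * w k) * (P i j * w i * w j) :=
        Finset.sum_congr rfl fun i _ => step i
    _ = ∑ k, ∑ i, ∑ j, r * (F k * w k) * (P i j * w i * w j) := Finset.sum_comm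
    _ = 0 := trip_first0 r F w P h

lemma KahlerSetting.Jl_anti {n : ℕ} (S : KahlerSetting n) (x : S.M) (i j : Fin (2*n)) :
    S.Jl x i j = - S.Jl x j i := by
  have step1 : S.Jl x i j
      = ∑ d, (∑ k, ∑ l, S.g x k l * S.J x k i * S.J x l d) * S.J x d j := by
    unfold KahlerSetting.Jl
    exact Finset.sum_congr rfl fun d _ => by rw [S.J_herm x i d]
  have step2 : S.Jl x i j
      = ∑ k, ∑ l, (S.g x k l * S.J x k i) * (∑ d, S.J x l d * S.J x d j) := by
    rw [step1]
    calc ∑ d, (∑ k, ∑ l, S.g x k l * S.J x k i * S.J x l d) * S.J x d j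
        = ∑ d, ∑ k, ∑ l, (S.g x k l * S.J x k i) * (S.J x l d * S.J x d j) := by
          simp only [Finset.sum_mul]
          exact Finset.sum_congr rfl fun d _ => Finset.sum_congr rfl fun k _ =>
            Finset.sum_congr rfl fun l _ => by ring
      _ = ∑ k, ∑ d, ∑ l, (S.g x k l * S.J x k i) * (S.J x l d * S.J x d j) :=
          Finset.sum_comm
      _ = ∑ k, ∑ l, ∑ d, (S.g x k l * S.J x k i) * (S.J x l d * S.J x d j) :=
          Finset.sum_congr rfl fun k _ => Finset.sum_comm
      _ = ∑ k, ∑ l, (S.g x k l * S.J x k i) * (∑ d, S.J x l d * S.J x d j) := by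
          simp only [Finset.mul_sum]
  rw [step2]
  have step3 : ∀ k : Fin (2*n), ∑ l, (S.g x k l * S.J x k i) * (∑ d, S.J x l d * S.J x d j)
      = - (S.g x k j * S.J x k i) := by
    intro k
    have : ∀ l : Fin (2*n), (S.g x k l * S.J x k i) * (∑ d, S.J x l d * S.J x d j)
        = (S.g x k l * S.J x k i) * (if l = j then (-1:ℝ) else 0) := fun l => by
      rw [S.J_sq x l j]
    simp only [this, mul_ite, mul_neg, mul_one, mul_zero]
    simp
  rw [Finset.sum_congr rfl fun k _ => step3 k]
  unfold KahlerSetting.Jl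
  rw [← Finset.sum_neg_distrib]
  exact Finset.sum_congr rfl fun k _ => by rw [S.g_symm x j k]

lemma KahlerSetting.Jl_vv {n : ℕ} (S : KahlerSetting n) (x : S.M) (w : Fin (2*n) → ℝ) :
    ∑ i, ∑ j, S.Jl x i j * w i * w j = 0 := by
  have h : (∑ i, ∑ j, S.Jl x i j * w i * w j) = - ∑ i, ∑ j, S.Jl x i j * w i * w j := by
    nth_rewrite 1 [Finset.sum_comm]
    rw [← Finset.sum_neg_distrib]
    refine Finset.sum_congr rfl fun i _ => ?_
    rw [← Finset.sum_neg_distrib]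
    refine Finset.sum_congr rfl fun j _ => ?_
    rw [S.Jl_anti x j i]
    ring
  linarith

/-- Along a complete lightlike geodesic `γ` (with velocity components `v`,
satisfying `g_{ij} v^i v^j = 0` and the chain rules coming from `∇_{γ'}γ' = 0`), a
solution `f` of the Tanno equation satisfies `(f∘γ)''' = 0`, so `f∘γ` is a polynomial
of degree at most `2`. -/
theorem tanno_along_lightlike_geodesic {n : ℕ} (S : KahlerSetting n)
    (c : ℝ) (f : S.M → ℝ) (hf : S.IsTannoSol c f)
    (γ : ℝ → S.M) (v : ℝ → Fin (2*n) → ℝ)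
    (hlight : ∀ t, ∑ i, ∑ j, S.g (γ t) i j * v t i * v t j = 0)
    (hchain1 : ∀ t, HasDerivAt (fun s => f (γ s)) (∑ i, S.D0 f (γ t) i * v t i) t)
    (hchain2 : ∀ t, HasDerivAt (fun s => ∑ i, S.D0 f (γ s) i * v s i)
        (∑ i, ∑ j, S.Hess f (γ t) i j * v t i * v t j) t)
    (hchain3 : ∀ t, HasDerivAt (fun s => ∑ i, ∑ j, S.Hess f (γ s) i j * v s i * v s j)
        (∑ i, ∑ j, ∑ k, S.T3 f (γ t) i j k * v t i * v t j * v t k) t) :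
    (∀ t, deriv (deriv (deriv (fun s => f (γ s)))) t = 0) ∧
    ∃ A B C : ℝ, ∀ t, f (γ t) = A * t^2 + B * t + C := by
  -- third derivative of f∘γ vanishes along γ
  have key : ∀ t, (∑ i, ∑ j, ∑ k, S.T3 f (γ t) i j k * v t i * v t j * v t k) = 0 := by
    intro t
    have hG : ∑ i, ∑ j, S.g (γ t) i j * v t i * v t j = 0 := hlight t
    have hJv : ∑ i, ∑ j, S.Jl (γ t) i j * v t i * v t j = 0 := S.Jl_vv (γ t) (v t)
    have expand : ∀ i j k, S.T3 f (γ t) i j k * v t i * v t j * v t k =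
        (-(2*c)) * (S.D0 f (γ t) k * v t k) * (S.g (γ t) i j * v t i * v t j)
        + (-c) * (S.D0 f (γ t) i * v t i) * (S.g (γ t) j k * v t j * v t k)
        + (-c) * (S.D0 f (γ t) j * v t j) * (S.g (γ t) i k * v t i * v t k)
        + c * (S.fbar f (γ t) i * v t i) * (S.Jl (γ t) j k * v t j * v t k)
        + c * (S.fbar f (γ t) j * v t j) * (S.Jl (γ t) i k * v t i * v t k) := by
      intro i j k
      linear_combination (v t i * v t j * v t k) * (hf (γ t) i j k)
    calc ∑ i, ∑ j, ∑ k, S.T3 f (γ t) i j k * v t i * v t j * v t k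
        = (∑ i, ∑ j, ∑ k, (-(2*c)) * (S.D0 f (γ t) k * v t k) * (S.g (γ t) i j * v t i * v t j))
        + (∑ i, ∑ j, ∑ k, (-c) * (S.D0 f (γ t) i * v t i) * (S.g (γ t) j k * v t j * v t k))
        + (∑ i, ∑ j, ∑ k, (-c) * (S.D0 f (γ t) j * v t j) * (S.g (γ t) i k * v t i * v t k))
        + (∑ i, ∑ j, ∑ k, c * (S.fbar f (γ t) i * v t i) * (S.Jl (γ t) j k * v t j * v t k))
        + (∑ i, ∑ j, ∑ k, c * (S.fbar f (γ t) j * v t j) * (S.Jl (γ t) i k * v t i * v t k)) := by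
          simp only [← Finset.sum_add_distrib]
          exact Finset.sum_congr rfl fun i _ => Finset.sum_congr rfl fun j _ =>
            Finset.sum_congr rfl fun k _ => expand i j k
      _ = 0 := by
          rw [trip_outer0 (-(2*c)) (S.D0 f (γ t)) (v t) (S.g (γ t)) hG,
            trip_first0 (-c) (S.D0 f (γ t)) (v t) (S.g (γ t)) hG,
            trip_mid0 (-c) (S.D0 f (γ t)) (v t) (S.g (γ t)) hG,
            trip_first0 c (S.fbar f (γ t)) (v t) (S.Jl (γ t)) hJv,
            trip_mid0 c (S.fbar f (γ t)) (v t) (S.Jl (γ t)) hJv]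
          ring
  have h3 : ∀ t, HasDerivAt (fun s => ∑ i, ∑ j, S.Hess f (γ s) i j * v s i * v s j) 0 t :=
    fun t => key t ▸ hchain3 t
  -- the second derivative is constant
  have hg2const : ∀ t, (∑ i, ∑ j, S.Hess f (γ t) i j * v t i * v t j)
      = (∑ i, ∑ j, S.Hess f (γ 0) i j * v 0 i * v 0 j) := by
    intro t
    exact is_const_of_deriv_eq_zero (fun s => (h3 s).differentiableAt)
      (fun s => (h3 s).deriv) t 0
  set K : ℝ := ∑ i, ∑ j, S.Hess f (γ 0) i j * v 0 i * v 0 j with hK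
  have hg1 : ∀ t, HasDerivAt (fun s => ∑ i, S.D0 f (γ s) i * v s i) K t := by
    intro t
    have := hchain2 t
    rwa [hg2const t] at this
  -- first derivative is affine
  have hg1aff : ∀ t, (∑ i, S.D0 f (γ t) i * v t i) = K * t + (∑ i, S.D0 f (γ 0) i * v 0 i) := by
    intro t
    have hphi : ∀ s : ℝ, HasDerivAt (fun u => (∑ i, S.D0 f (γ u) i * v u i) - K * u) 0 s := by
      intro s
      have h1 : HasDerivAt (fun u : ℝ => K * u) K s := by
        simpa using (hasDerivAt_id s).const_mul K
      simpa using (hg1 s).fun_sub h1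
    have := is_const_of_deriv_eq_zero (fun s => (hphi s).differentiableAt)
      (fun s => (hphi s).deriv) t 0
    simp only [mul_zero, sub_zero] at this
    linarith
  -- f∘γ is a quadratic polynomial
  set B : ℝ := ∑ i, S.D0 f (γ 0) i * v 0 i with hB
  have hfq : ∀ t, f (γ t) = (K/2) * t^2 + B * t + f (γ 0) := by
    intro t
    have hpsi : ∀ s : ℝ, HasDerivAt (fun u => f (γ u) - ((K/2) * u^2 + B * u)) 0 s := by
      intro s
      have h1 : HasDerivAt (fun u : ℝ => (K/2) * u^2 + B * u) (K * s + B) s := by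
        have hp : HasDerivAt (fun u : ℝ => u^2) (2 * s) s := by
          simpa using hasDerivAt_pow 2 s
        have := (hp.const_mul (K/2)).fun_add ((hasDerivAt_id s).const_mul B)
        rw [show K * s + B = K / 2 * (2 * s) + B * 1 by ring]
        exact this
      have h2 := (hchain1 s).fun_sub h1
      rw [hg1aff s] at h2
      simpa using h2
    have := is_const_of_deriv_eq_zero (fun s => (hpsi s).differentiableAt)
      (fun s => (hpsi s).deriv) t 0
    nlinarith [this]
  constructor
  · intro t
    have d1 : deriv (fun s => f (γ s)) = fun s => ∑ i, S.D0 f (γ s) i * v s i :=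
      funext fun s => (hchain1 s).deriv
    have d2 : deriv (fun s => ∑ i, S.D0 f (γ s) i * v s i)
        = fun s => ∑ i, ∑ j, S.Hess f (γ s) i j * v s i * v s j :=
      funext fun s => (hchain2 s).deriv
    rw [d1, d2]
    exact (h3 t).deriv
  · exact ⟨K/2, B, f (γ 0), hfq⟩
end AuxTriple
end
end

section
/- Let A be an endomorphism of a finite-dimensional real vector space having at least two distinct real eigenvalues. Then there exists a real polynomial P such that P(A) is a nontrivial projector, i.e. P(A)² = P(A), P(A) ≠ 0, and P(A) ≠ Id. -/
open Polynomial Module.End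

/-- An endomorphism of a finite-dimensional real vector space with at
least two distinct real eigenvalues admits a real polynomial `P` such that `P(A)` is a
nontrivial projector. -/
theorem exists_polynomial_projector {V : Type*} [AddCommGroup V] [Module ℝ V]
    [FiniteDimensional ℝ V] (A : V →ₗ[ℝ] V) (a b : ℝ) (hab : a ≠ b)
    (ha : Module.End.HasEigenvalue A a) (hb : Module.End.HasEigenvalue A b) :
    ∃ P : Polynomial ℝ,
      (Polynomial.aeval A P) ∘ₗ (Polynomial.aeval A P) = Polynomial.aeval A P ∧
      Polynomial.aeval A P ≠ 0 ∧ Polynomial.aeval A P ≠ LinearMap.id := by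
  set μ : ℝ[X] := minpoly ℝ A with hμ
  have hμ0 : μ ≠ 0 := minpoly.ne_zero (Algebra.IsIntegral.isIntegral A)
  have hroota : μ.IsRoot a := Module.End.isRoot_of_hasEigenvalue ha
  have hrootb : μ.IsRoot b := Module.End.isRoot_of_hasEigenvalue hb
  obtain ⟨q, hq, hnd⟩ := μ.exists_eq_pow_rootMultiplicity_mul_and_not_dvd hμ0 a
  set m := μ.rootMultiplicity a with hm
  have hm0 : 0 < m := (rootMultiplicity_pos hμ0).2 hroota
  -- coprimality
  have hcop : IsCoprime ((X - C a) ^ m) q :=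
    (((irreducible_X_sub_C a).coprime_iff_not_dvd).2 hnd).pow_left
  obtain ⟨u, v, huv⟩ := hcop
  refine ⟨v * q, ?_, ?_, ?_⟩
  · -- idempotent
    have hdvd : μ ∣ (v * q) * (v * q) - (v * q) := by
      have : (v * q) * (v * q) - (v * q) = -((v * q) * (u * ((X - C a) ^ m))) := by
        have h1 : u * (X - C a) ^ m = 1 - v * q := by linear_combination huv
        rw [h1]; ring
      rw [this, hq]
      exact dvd_neg.2 ⟨v * u, by ring⟩
    have h0 : aeval A ((v * q) * (v * q) - (v * q)) = 0 := by
      obtain ⟨c, hc⟩ := hdvd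
      have hz : aeval A μ = 0 := minpoly.aeval ℝ A
      rw [hc, map_mul, hz, zero_mul]
    rw [map_sub, sub_eq_zero, map_mul, Module.End.mul_eq_comp] at h0
    exact h0
  · -- nonzero: acts as identity on an a-eigenvector
    obtain ⟨x, hx⟩ := ha.exists_hasEigenvector
    have heval : (v * q).eval a = 1 := by
      have h1 := congrArg (eval a) huv
      simp only [eval_add, eval_mul, eval_pow, eval_sub, eval_X, eval_C, sub_self,
        zero_pow hm0.ne', mul_zero, zero_add, eval_one] at h1
      simpa [eval_mul] using h1
    intro h
    have := Module.End.aeval_apply_of_hasEigenvector (p := v * q) hx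
    rw [h, heval, one_smul] at this
    exact hx.right (by simpa using this.symm)
  · -- not identity: kills a b-eigenvector
    obtain ⟨y, hy⟩ := hb.exists_hasEigenvector
    have hqb : q.eval b = 0 := by
      have h1 : μ.eval b = 0 := hrootb
      rw [hq] at h1
      simp only [eval_mul, eval_pow, eval_sub, eval_X, eval_C] at h1
      have : (b - a) ^ m ≠ 0 := pow_ne_zero _ (sub_ne_zero.2 (Ne.symm hab))
      exact (mul_eq_zero.1 h1).resolve_left this
    intro h
    have := Module.End.aeval_apply_of_hasEigenvector (p := v * q) hy
    rw [h] at this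
    simp only [eval_mul, hqb, mul_zero, zero_smul, LinearMap.id_apply] at this
    exact hy.right this
end

section
/- Let f be a solution with L(f) a nontrivial projector, (a_{ij}, f_i, μ) the associated data, and p a point with 0 < μ(p) < 1. Then at p the endomorphism a^i_j has exactly the eigenvalues 1, 0, and 1−μ(p), with eigenspaces: E_1 = E_{L(f)}(1) ∩ T_pM of dimension 2k, E_0 = E_{L(f)}(0) ∩ T_pM of dimension 2n−2k−2, and E_{1−μ} = span{f^i, f̄^i} of dimension 2; moreover T_pM = E_1 ⊕ E_0 ⊕ E_{1−μ}. -/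
open scoped BigOperators

noncomputable section

section AuxEigen
open Module Submodule

/-- dot-product functional as a linear map -/
def dotL {m : ℕ} (w : Fin m → ℝ) : (Fin m → ℝ) →ₗ[ℝ] ℝ where
  toFun v := ∑ j, w j * v j
  map_add' u v := by simp [mul_add, Finset.sum_add_distrib]
  map_smul' c v := by simp [Finset.mul_sum, mul_left_comm]

@[simp] lemma dotL_apply {m : ℕ} (w v : Fin m → ℝ) : dotL w v = ∑ j, w j * v j := rfl

lemma span_pair_finrank_two {V : Type*} [AddCommGroup V] [Module ℝ V] {x y : V}
    (h : ∀ a b : ℝ, a • x + b • y = 0 → a = 0 ∧ b = 0) :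
    Module.finrank ℝ (Submodule.span ℝ ({x, y} : Set V)) = 2 := by
  have hli : LinearIndependent ℝ ![x, y] := LinearIndependent.pair_iff.mpr h
  have hr : Set.range ![x, y] = ({x, y} : Set V) := by
    simp only [Matrix.range_cons, Matrix.range_empty, Set.union_empty, Set.union_singleton]
    exact Set.pair_comm y x
  have hc := finrank_span_eq_card hli
  rw [hr] at hc
  simpa using hc

lemma core {V : Type*} [AddCommGroup V] [Module ℝ V] [FiniteDimensional ℝ V]
    (𝔸 : Module.End ℝ V) (φ φb : V →ₗ[ℝ] ℝ) (F Fb : V) (μ : ℝ)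
    (hμ0 : 0 < μ) (hμ1 : μ < 1)
    (hφF : φ F = μ * (1 - μ)) (hφFb : φ Fb = 0)
    (hφbF : φb F = 0) (hφbFb : φb Fb = μ * (1 - μ))
    (h𝔸F : 𝔸 F = (1 - μ) • F) (h𝔸Fb : 𝔸 Fb = (1 - μ) • Fb)
    (hφ𝔸 : ∀ v, φ (𝔸 v) = (1 - μ) * φ v) (hφb𝔸 : ∀ v, φb (𝔸 v) = (1 - μ) * φb v)
    (h𝔸𝔸 : ∀ v, 𝔸 (𝔸 v) = 𝔸 v - φ v • F - φb v • Fb) :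
    (∀ t : ℝ, Module.End.HasEigenvalue 𝔸 t → t = 1 ∨ t = 0 ∨ t = 1 - μ) ∧
    (Module.End.eigenspace 𝔸 (1 - μ) = Submodule.span ℝ ({F, Fb} : Set V)) ∧
    Module.finrank ℝ (Module.End.eigenspace 𝔸 (1 - μ)) = 2 ∧
    (Module.End.eigenspace 𝔸 1 ⊔ Module.End.eigenspace 𝔸 0
      ⊔ Module.End.eigenspace 𝔸 (1 - μ) = ⊤) ∧
    (∀ v ∈ Module.End.eigenspace 𝔸 1, φ v = 0 ∧ φb v = 0) ∧
    (∀ v ∈ Module.End.eigenspace 𝔸 0, φ v = 0 ∧ φb v = 0) ∧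
    Module.finrank ℝ (Module.End.eigenspace 𝔸 1)
      + Module.finrank ℝ (Module.End.eigenspace 𝔸 0) + 2 = Module.finrank ℝ V := by
  have hμne : μ ≠ 0 := ne_of_gt hμ0
  have h1μne : (1 : ℝ) - μ ≠ 0 := sub_ne_zero.mpr (ne_of_gt hμ1)
  have hμμ : μ * (1 - μ) ≠ 0 := mul_ne_zero hμne h1μne
  -- eigenspace (1-μ) = span {F, Fb}
  have hFe : F ∈ Module.End.eigenspace 𝔸 (1 - μ) := Module.End.mem_eigenspace_iff.mpr h𝔸F
  have hFbe : Fb ∈ Module.End.eigenspace 𝔸 (1 - μ) := Module.End.mem_eigenspace_iff.mpr h𝔸Fb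
  have hspan : Module.End.eigenspace 𝔸 (1 - μ) = Submodule.span ℝ ({F, Fb} : Set V) := by
    apply le_antisymm
    · intro v hv
      rw [Module.End.mem_eigenspace_iff] at hv
      have he : (μ * (1 - μ)) • v = φ v • F + φb v • Fb := by
        have h2 := h𝔸𝔸 v
        rw [hv, map_smul, hv, smul_smul] at h2
        have : ((1 - μ) - (1 - μ) * (1 - μ)) • v = φ v • F + φb v • Fb := by
          rw [sub_smul]; rw [h2]; abel
        rw [← this]; congr 1; ring
      rw [Submodule.mem_span_pair]
      refine ⟨(μ * (1 - μ))⁻¹ * φ v, (μ * (1 - μ))⁻¹ * φb v, ?_⟩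
      rw [mul_smul, mul_smul, ← smul_add, ← he, smul_smul, inv_mul_cancel₀ hμμ, one_smul]
    · rw [Submodule.span_le]
      rintro x (rfl | rfl)
      · exact hFe
      · exact hFbe
  -- φ, φb vanish on eigenspaces 1 and 0
  have hv1 : ∀ v ∈ Module.End.eigenspace 𝔸 1, φ v = 0 ∧ φb v = 0 := by
    intro v hv
    rw [Module.End.mem_eigenspace_iff, one_smul] at hv
    constructor
    · have := hφ𝔸 v; rw [hv] at this; nlinarith [this]
    · have := hφb𝔸 v; rw [hv] at this; nlinarith [this]
  have hv0 : ∀ v ∈ Module.End.eigenspace 𝔸 0, φ v = 0 ∧ φb v = 0 := by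
    intro v hv
    rw [Module.End.mem_eigenspace_iff, zero_smul] at hv
    constructor
    · have := hφ𝔸 v; rw [hv, map_zero] at this
      exact by nlinarith [this]
    · have := hφb𝔸 v; rw [hv, map_zero] at this
      exact by nlinarith [this]
  -- linear independence of F, Fb
  have hind : ∀ a b : ℝ, a • F + b • Fb = 0 → a = 0 ∧ b = 0 := by
    intro a b hab
    have h1 : a * (μ * (1 - μ)) = 0 := by
      have := congrArg φ hab
      simpa [map_add, map_smul, hφF, hφFb, smul_eq_mul] using this
    have h2 : b * (μ * (1 - μ)) = 0 := by
      have := congrArg φb hab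
      simpa [map_add, map_smul, hφbF, hφbFb, smul_eq_mul] using this
    exact ⟨by
      rcases mul_eq_zero.mp h1 with h | h
      · exact h
      · exact absurd h hμμ, by
      rcases mul_eq_zero.mp h2 with h | h
      · exact h
      · exact absurd h hμμ⟩
  -- eigenvalue classification
  have heig : ∀ t : ℝ, Module.End.HasEigenvalue 𝔸 t → t = 1 ∨ t = 0 ∨ t = 1 - μ := by
    intro t ht
    by_contra hcon
    push_neg at hcon
    obtain ⟨ht1, ht0, htμ⟩ := hcon
    obtain ⟨v, hveig⟩ := ht.exists_hasEigenvector
    have hv : 𝔸 v = t • v := hveig.apply_eq_smul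
    have hv0' : v ≠ 0 := hveig.2
    have hc : (t - t * t) ≠ 0 := by
      intro h
      rcases mul_eq_zero.mp (show t * (1 - t) = 0 by linear_combination h) with h' | h'
      · exact ht0 h'
      · exact ht1 (by linarith)
    have he : (t - t * t) • v = φ v • F + φb v • Fb := by
      have h2 := h𝔸𝔸 v
      rw [hv, map_smul, hv, smul_smul] at h2
      rw [sub_smul]
      rw [h2]; abel
    have hvform : v = (t - t * t)⁻¹ • (φ v • F + φb v • Fb) := by
      rw [← he, smul_smul, inv_mul_cancel₀ hc, one_smul]
    have h𝔸v : 𝔸 v = (1 - μ) • v := by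
      rw [hvform]
      rw [map_smul, map_add, map_smul, map_smul, h𝔸F, h𝔸Fb]
      module
    have : (t - (1 - μ)) • v = 0 := by rw [sub_smul, ← hv, h𝔸v, sub_self]
    rcases smul_eq_zero.mp this with h | h
    · exact htμ (by linarith [sub_eq_zero.mp h])
    · exact hv0' h
  -- decomposition: sup of eigenspaces is everything
  have htop : Module.End.eigenspace 𝔸 1 ⊔ Module.End.eigenspace 𝔸 0
      ⊔ Module.End.eigenspace 𝔸 (1 - μ) = ⊤ := by
    rw [eq_top_iff]
    intro v _
    set c : ℝ := (μ * (1 - μ))⁻¹ with hc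
    set w : V := v - (c * φ v) • F - (c * φb v) • Fb with hw
    have hcμ : c * (μ * (1 - μ)) = 1 := inv_mul_cancel₀ hμμ
    have hφw : φ w = 0 := by
      rw [hw]
      simp only [map_sub, map_smul, hφF, hφFb, smul_eq_mul]
      have : c * φ v * (μ * (1 - μ)) = φ v := by
        rw [mul_comm (c * φ v), ← mul_assoc, mul_comm (μ * (1-μ)) c, hcμ, one_mul]
      rw [this]; ring
    have hφbw : φb w = 0 := by
      rw [hw]
      simp only [map_sub, map_smul, hφbF, hφbFb, smul_eq_mul]
      have : c * φb v * (μ * (1 - μ)) = φb v := by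
        rw [mul_comm (c * φb v), ← mul_assoc, mul_comm (μ * (1-μ)) c, hcμ, one_mul]
      rw [this]; ring
    have h1mem : 𝔸 w ∈ Module.End.eigenspace 𝔸 1 := by
      rw [Module.End.mem_eigenspace_iff, one_smul, h𝔸𝔸 w, hφw, hφbw]
      simp
    have h0mem : w - 𝔸 w ∈ Module.End.eigenspace 𝔸 0 := by
      rw [Module.End.mem_eigenspace_iff, zero_smul, map_sub, h𝔸𝔸 w, hφw, hφbw]
      simp
    have hVmem : (c * φ v) • F + (c * φb v) • Fb ∈ Module.End.eigenspace 𝔸 (1 - μ) :=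
      Submodule.add_mem _ (Submodule.smul_mem _ _ hFe) (Submodule.smul_mem _ _ hFbe)
    have hvdecomp : v = (𝔸 w + (w - 𝔸 w)) + ((c * φ v) • F + (c * φb v) • Fb) := by
      rw [hw]; abel
    rw [hvdecomp]
    exact Submodule.add_mem _
      (Submodule.mem_sup_left (Submodule.add_mem _ (Submodule.mem_sup_left h1mem)
        (Submodule.mem_sup_right h0mem)))
      (Submodule.mem_sup_right hVmem)
  -- finrank of E_{1-μ}
  have hfr2 : Module.finrank ℝ (Module.End.eigenspace 𝔸 (1 - μ)) = 2 := by
    rw [hspan]; exact span_pair_finrank_two hind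
  -- disjointness
  have hdisj10 : Module.End.eigenspace 𝔸 1 ⊓ Module.End.eigenspace 𝔸 0 = ⊥ := by
    rw [eq_bot_iff]
    intro x hx
    obtain ⟨hx1, hx0⟩ := Submodule.mem_inf.mp hx
    rw [Module.End.mem_eigenspace_iff, one_smul] at hx1
    rw [Module.End.mem_eigenspace_iff, zero_smul] at hx0
    rw [Submodule.mem_bot, ← hx1, hx0]
  have hdisj2 : (Module.End.eigenspace 𝔸 1 ⊔ Module.End.eigenspace 𝔸 0)
      ⊓ Module.End.eigenspace 𝔸 (1 - μ) = ⊥ := by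
    rw [eq_bot_iff]
    intro x hx
    obtain ⟨hxs, hxμ⟩ := Submodule.mem_inf.mp hx
    obtain ⟨y, hy, z, hz, rfl⟩ := Submodule.mem_sup.mp hxs
    have hφx : φ (y + z) = 0 := by
      rw [map_add, (hv1 y hy).1, (hv0 z hz).1, add_zero]
    have hφbx : φb (y + z) = 0 := by
      rw [map_add, (hv1 y hy).2, (hv0 z hz).2, add_zero]
    rw [hspan, Submodule.mem_span_pair] at hxμ
    obtain ⟨a, b, hab⟩ := hxμ
    have ha : a * (μ * (1 - μ)) = 0 := by
      have := congrArg φ hab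
      simpa [map_add, map_smul, hφF, hφFb, smul_eq_mul, hφx] using this
    have hb : b * (μ * (1 - μ)) = 0 := by
      have := congrArg φb hab
      simpa [map_add, map_smul, hφbF, hφbFb, smul_eq_mul, hφbx] using this
    have ha0 : a = 0 := by
      rcases mul_eq_zero.mp ha with h | h
      · exact h
      · exact absurd h hμμ
    have hb0 : b = 0 := by
      rcases mul_eq_zero.mp hb with h | h
      · exact h
      · exact absurd h hμμ
    rw [← hab, ha0, hb0, zero_smul, zero_smul, add_zero]
    exact Submodule.zero_mem ⊥
  -- dimension count
  have hcount : Module.finrank ℝ (Module.End.eigenspace 𝔸 1)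
      + Module.finrank ℝ (Module.End.eigenspace 𝔸 0) + 2 = Module.finrank ℝ V := by
    have e1 := Submodule.finrank_sup_add_finrank_inf_eq
      (Module.End.eigenspace 𝔸 1) (Module.End.eigenspace 𝔸 0)
    rw [hdisj10, finrank_bot, add_zero] at e1
    have e2 := Submodule.finrank_sup_add_finrank_inf_eq
      (Module.End.eigenspace 𝔸 1 ⊔ Module.End.eigenspace 𝔸 0)
      (Module.End.eigenspace 𝔸 (1 - μ))
    rw [hdisj2, finrank_bot, add_zero, htop, finrank_top, e1, hfr2] at e2
    omega
  exact ⟨heig, hspan, hfr2, htop, hv1, hv0, hcount⟩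


end AuxEigen

open Module Submodule in
/-- If `L(f)` is a nontrivial projector, `(a_{ij}, f_i, μ)` the associated
data, and `p` a point with `0 < μ(p) < 1`, then `a^i_j` at `p` has exactly the
eigenvalues `1`, `0` and `1 - μ(p)`, with eigenspaces `E₁ = E_{L(f)}(1) ∩ T_pM` of
dimension `2k`, `E₀ = E_{L(f)}(0) ∩ T_pM` of dimension `2n - 2k - 2`, and
`E_{1-μ} = span{f^i, f̄^i}` of dimension `2`; moreover `T_pM = E₁ ⊕ E₀ ⊕ E_{1-μ}`. -/
theorem eigenstructure_of_a {n : ℕ} (S : KahlerSetting n) (f : S.M → ℝ)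
    (hf : S.IsTannoSol 1 f)
    (hproj : ∀ q : S.Mhat, S.Lhat f q * S.Lhat f q = S.Lhat f q)
    (h0 : ∃ q : S.Mhat, S.Lhat f q ≠ 0) (h1 : ∃ q : S.Mhat, S.Lhat f q ≠ 1)
    (p : S.M) (hμ0 : 0 < S.muF f p) (hμ1 : S.muF f p < 1)
    (k : ℕ)
    (hk : Module.finrank ℝ (Module.End.eigenspace (S.LEnd f p) 1) = 2*k + 2) :
    (∀ t : ℝ, Module.End.HasEigenvalue (S.aEnd f p) t →
        t = 1 ∨ t = 0 ∨ t = 1 - S.muF f p) ∧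
    Module.End.eigenspace (S.aEnd f p) 1
      = Submodule.comap (tangentEmb n) (Module.End.eigenspace (S.LEnd f p) 1) ∧
    Module.End.eigenspace (S.aEnd f p) 0
      = Submodule.comap (tangentEmb n) (Module.End.eigenspace (S.LEnd f p) 0) ∧
    Module.finrank ℝ (Module.End.eigenspace (S.aEnd f p) 1) = 2*k ∧
    Module.finrank ℝ (Module.End.eigenspace (S.aEnd f p) 0) = 2*n - 2*k - 2 ∧
    Module.End.eigenspace (S.aEnd f p) (1 - S.muF f p)
      = Submodule.span ℝ
          ({S.raise1 p (S.D0 f p), S.raise1 p (S.fbar f p)} : Set (Fin (2*n) → ℝ)) ∧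
    Module.finrank ℝ (Module.End.eigenspace (S.aEnd f p) (1 - S.muF f p)) = 2 ∧
    Module.End.eigenspace (S.aEnd f p) 1 ⊔ Module.End.eigenspace (S.aEnd f p) 0
        ⊔ Module.End.eigenspace (S.aEnd f p) (1 - S.muF f p) = ⊤ := by
  classical
  have hM : S.Lmat f p * S.Lmat f p = S.Lmat f p := hproj ((0, 0), p)
  have hent : ∀ x y, (∑ c, S.Lmat f p x c * S.Lmat f p c y) = S.Lmat f p x y := by
    intro x y; rw [← Matrix.mul_apply, hM]
  have hL11 : ∀ a b : Fin 2, S.Lmat f p (Sum.inl a) (Sum.inl b)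
      = if a = b then S.muF f p else 0 := by
    intro a b; simp [KahlerSetting.Lmat]
  have hL12 : ∀ (a : Fin 2) (j : Fin (2*n)), S.Lmat f p (Sum.inl a) (Sum.inr j)
      = if a = 0 then S.D0 f p j else S.fbar f p j := by
    intro a j; simp [KahlerSetting.Lmat]
  have hL21 : ∀ (i : Fin (2*n)) (b : Fin 2), S.Lmat f p (Sum.inr i) (Sum.inl b)
      = if b = 0 then S.raise1 p (S.D0 f p) i else S.raise1 p (S.fbar f p) i := by
    intro i b; simp [KahlerSetting.Lmat]
  have hL22 : ∀ i j, S.Lmat f p (Sum.inr i) (Sum.inr j) = S.aUp f p i j := by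
    intro i j; simp [KahlerSetting.Lmat]
  -- scalar identities from the projector property
  have h00 : (∑ j, S.D0 f p j * S.raise1 p (S.D0 f p) j)
      = S.muF f p * (1 - S.muF f p) := by
    have h := hent (Sum.inl 0) (Sum.inl 0)
    rw [Fintype.sum_sum_type] at h
    simp only [hL11, hL12, hL21, Fin.sum_univ_two] at h
    norm_num at h
    linarith
  have h01 : (∑ j, S.D0 f p j * S.raise1 p (S.fbar f p) j) = 0 := by
    have h := hent (Sum.inl 0) (Sum.inl 1)
    rw [Fintype.sum_sum_type] at h
    simp only [hL11, hL12, hL21, Fin.sum_univ_two] at h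
    norm_num at h
    linarith
  have h10 : (∑ j, S.fbar f p j * S.raise1 p (S.D0 f p) j) = 0 := by
    have h := hent (Sum.inl 1) (Sum.inl 0)
    rw [Fintype.sum_sum_type] at h
    simp only [hL11, hL12, hL21, Fin.sum_univ_two] at h
    norm_num at h
    linarith
  have h11 : (∑ j, S.fbar f p j * S.raise1 p (S.fbar f p) j)
      = S.muF f p * (1 - S.muF f p) := by
    have h := hent (Sum.inl 1) (Sum.inl 1)
    rw [Fintype.sum_sum_type] at h
    simp only [hL11, hL12, hL21, Fin.sum_univ_two] at h
    norm_num at h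
    linarith
  have hrowf : ∀ j, (∑ α, S.D0 f p α * S.aUp f p α j)
      = (1 - S.muF f p) * S.D0 f p j := by
    intro j
    have h := hent (Sum.inl 0) (Sum.inr j)
    rw [Fintype.sum_sum_type] at h
    simp only [hL11, hL12, hL22, Fin.sum_univ_two] at h
    norm_num at h
    linarith
  have hrowfb : ∀ j, (∑ α, S.fbar f p α * S.aUp f p α j)
      = (1 - S.muF f p) * S.fbar f p j := by
    intro j
    have h := hent (Sum.inl 1) (Sum.inr j)
    rw [Fintype.sum_sum_type] at h
    simp only [hL11, hL12, hL22, Fin.sum_univ_two] at h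
    norm_num at h
    linarith
  have hAF : ∀ i, (∑ α, S.aUp f p i α * S.raise1 p (S.D0 f p) α)
      = (1 - S.muF f p) * S.raise1 p (S.D0 f p) i := by
    intro i
    have h := hent (Sum.inr i) (Sum.inl 0)
    rw [Fintype.sum_sum_type] at h
    simp only [hL21, hL11, hL22, Fin.sum_univ_two] at h
    norm_num at h
    linarith
  have hAFb : ∀ i, (∑ α, S.aUp f p i α * S.raise1 p (S.fbar f p) α)
      = (1 - S.muF f p) * S.raise1 p (S.fbar f p) i := by
    intro i
    have h := hent (Sum.inr i) (Sum.inl 1)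
    rw [Fintype.sum_sum_type] at h
    simp only [hL21, hL11, hL22, Fin.sum_univ_two] at h
    norm_num at h
    linarith
  have hAA : ∀ i j, (∑ α, S.aUp f p i α * S.aUp f p α j)
      = S.aUp f p i j - S.raise1 p (S.D0 f p) i * S.D0 f p j
        - S.raise1 p (S.fbar f p) i * S.fbar f p j := by
    intro i j
    have h := hent (Sum.inr i) (Sum.inr j)
    rw [Fintype.sum_sum_type] at h
    simp only [hL21, hL12, hL22, Fin.sum_univ_two] at h
    norm_num at h
    linarith
  -- the endomorphism a, componentwise
  have haEnd : ∀ (v : Fin (2*n) → ℝ) i, S.aEnd f p v i = ∑ j, S.aUp f p i j * v j := by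
    intro v i
    simp [KahlerSetting.aEnd, Matrix.toLin'_apply, Matrix.mulVec, dotProduct]
  -- hypotheses for the core lemma
  have hφ𝔸 : ∀ v : Fin (2*n) → ℝ,
      dotL (S.D0 f p) (S.aEnd f p v) = (1 - S.muF f p) * dotL (S.D0 f p) v := by
    intro v
    rw [dotL_apply, dotL_apply]
    calc (∑ j, S.D0 f p j * S.aEnd f p v j)
        = ∑ j, ∑ α, S.D0 f p j * (S.aUp f p j α * v α) := by
          refine Finset.sum_congr rfl fun j _ => ?_
          rw [haEnd, Finset.mul_sum]
      _ = ∑ α, ∑ j, S.D0 f p j * (S.aUp f p j α * v α) := Finset.sum_comm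
      _ = ∑ α, (∑ j, S.D0 f p j * S.aUp f p j α) * v α := by
          refine Finset.sum_congr rfl fun α _ => ?_
          rw [Finset.sum_mul]
          exact Finset.sum_congr rfl fun j _ => by ring
      _ = ∑ α, ((1 - S.muF f p) * S.D0 f p α) * v α := by
          refine Finset.sum_congr rfl fun α _ => ?_
          rw [hrowf]
      _ = (1 - S.muF f p) * ∑ α, S.D0 f p α * v α := by
          rw [Finset.mul_sum]
          exact Finset.sum_congr rfl fun α _ => by ring
  have hφb𝔸 : ∀ v : Fin (2*n) → ℝ,
      dotL (S.fbar f p) (S.aEnd f p v) = (1 - S.muF f p) * dotL (S.fbar f p) v := by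
    intro v
    rw [dotL_apply, dotL_apply]
    calc (∑ j, S.fbar f p j * S.aEnd f p v j)
        = ∑ j, ∑ α, S.fbar f p j * (S.aUp f p j α * v α) := by
          refine Finset.sum_congr rfl fun j _ => ?_
          rw [haEnd, Finset.mul_sum]
      _ = ∑ α, ∑ j, S.fbar f p j * (S.aUp f p j α * v α) := Finset.sum_comm
      _ = ∑ α, (∑ j, S.fbar f p j * S.aUp f p j α) * v α := by
          refine Finset.sum_congr rfl fun α _ => ?_
          rw [Finset.sum_mul]
          exact Finset.sum_congr rfl fun j _ => by ring
      _ = ∑ α, ((1 - S.muF f p) * S.fbar f p α) * v α := by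
          refine Finset.sum_congr rfl fun α _ => ?_
          rw [hrowfb]
      _ = (1 - S.muF f p) * ∑ α, S.fbar f p α * v α := by
          rw [Finset.mul_sum]
          exact Finset.sum_congr rfl fun α _ => by ring
  have h𝔸F : S.aEnd f p (S.raise1 p (S.D0 f p))
      = (1 - S.muF f p) • S.raise1 p (S.D0 f p) := by
    funext i
    rw [haEnd, hAF i, Pi.smul_apply, smul_eq_mul]
  have h𝔸Fb : S.aEnd f p (S.raise1 p (S.fbar f p))
      = (1 - S.muF f p) • S.raise1 p (S.fbar f p) := by
    funext i
    rw [haEnd, hAFb i, Pi.smul_apply, smul_eq_mul]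
  have h𝔸𝔸 : ∀ v : Fin (2*n) → ℝ, S.aEnd f p (S.aEnd f p v)
      = S.aEnd f p v - dotL (S.D0 f p) v • S.raise1 p (S.D0 f p)
        - dotL (S.fbar f p) v • S.raise1 p (S.fbar f p) := by
    intro v
    funext i
    have step : S.aEnd f p (S.aEnd f p v) i
        = ∑ j, (∑ α, S.aUp f p i α * S.aUp f p α j) * v j := by
      rw [haEnd]
      calc (∑ α, S.aUp f p i α * S.aEnd f p v α)
          = ∑ α, ∑ j, S.aUp f p i α * (S.aUp f p α j * v j) := by
            refine Finset.sum_congr rfl fun α _ => ?_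
            rw [haEnd, Finset.mul_sum]
        _ = ∑ j, ∑ α, S.aUp f p i α * (S.aUp f p α j * v j) := Finset.sum_comm
        _ = ∑ j, (∑ α, S.aUp f p i α * S.aUp f p α j) * v j := by
            refine Finset.sum_congr rfl fun j _ => ?_
            rw [Finset.sum_mul]
            exact Finset.sum_congr rfl fun α _ => by ring
    rw [step]
    have step2 : (∑ j, (∑ α, S.aUp f p i α * S.aUp f p α j) * v j)
        = (∑ j, S.aUp f p i j * v j)
          - S.raise1 p (S.D0 f p) i * (∑ j, S.D0 f p j * v j)
          - S.raise1 p (S.fbar f p) i * (∑ j, S.fbar f p j * v j) := by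
      rw [Finset.mul_sum, Finset.mul_sum, ← Finset.sum_sub_distrib, ← Finset.sum_sub_distrib]
      refine Finset.sum_congr rfl fun j _ => ?_
      rw [hAA]
      ring
    rw [step2]
    simp only [Pi.sub_apply, Pi.smul_apply, smul_eq_mul, dotL_apply, haEnd]
    ring
  obtain ⟨heig, hspan, hfr2, htop, hv1E, hv0E, hcount⟩ :=
    core (S.aEnd f p) (dotL (S.D0 f p)) (dotL (S.fbar f p))
      (S.raise1 p (S.D0 f p)) (S.raise1 p (S.fbar f p)) (S.muF f p) hμ0 hμ1
      (by rw [dotL_apply]; exact h00) (by rw [dotL_apply]; exact h01)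
      (by rw [dotL_apply]; exact h10) (by rw [dotL_apply]; exact h11)
      h𝔸F h𝔸Fb hφ𝔸 hφb𝔸 h𝔸𝔸
  -- LEnd componentwise
  have hLinl : ∀ (u : Fin 2 ⊕ Fin (2*n) → ℝ) (a : Fin 2), S.LEnd f p u (Sum.inl a)
      = S.muF f p * u (Sum.inl a)
        + ∑ j, (if a = 0 then S.D0 f p j else S.fbar f p j) * u (Sum.inr j) := by
    intro u a
    have hstart : S.LEnd f p u (Sum.inl a) = ∑ c, S.Lmat f p (Sum.inl a) c * u c := by
      simp [KahlerSetting.LEnd, Matrix.toLin'_apply, Matrix.mulVec, dotProduct]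
    rw [hstart, Fintype.sum_sum_type]
    simp only [hL11, hL12, Fin.sum_univ_two]
    fin_cases a <;> norm_num
  have hLinr : ∀ (u : Fin 2 ⊕ Fin (2*n) → ℝ) (i : Fin (2*n)), S.LEnd f p u (Sum.inr i)
      = S.raise1 p (S.D0 f p) i * u (Sum.inl 0) + S.raise1 p (S.fbar f p) i * u (Sum.inl 1)
        + ∑ j, S.aUp f p i j * u (Sum.inr j) := by
    intro u i
    have hstart : S.LEnd f p u (Sum.inr i) = ∑ c, S.Lmat f p (Sum.inr i) c * u c := by
      simp [KahlerSetting.LEnd, Matrix.toLin'_apply, Matrix.mulVec, dotProduct]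
    rw [hstart, Fintype.sum_sum_type]
    simp only [hL21, hL22, Fin.sum_univ_two]
    norm_num
  have hembl : ∀ (v : Fin (2*n) → ℝ) (a : Fin 2), tangentEmb n v (Sum.inl a) = 0 :=
    fun _ _ => rfl
  have hembr : ∀ (v : Fin (2*n) → ℝ) (j : Fin (2*n)), tangentEmb n v (Sum.inr j) = v j :=
    fun _ _ => rfl
  have hμne : S.muF f p ≠ 0 := ne_of_gt hμ0
  -- comap characterization for eigenvalue 1
  have hcomap1 : Module.End.eigenspace (S.aEnd f p) 1
      = Submodule.comap (tangentEmb n) (Module.End.eigenspace (S.LEnd f p) 1) := by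
    ext v
    rw [Submodule.mem_comap]
    constructor
    · intro hm
      obtain ⟨hφv, hφbv⟩ := hv1E v hm
      rw [dotL_apply] at hφv hφbv
      have hv : S.aEnd f p v = v := by
        have := Module.End.mem_eigenspace_iff.mp hm
        rwa [one_smul] at this
      rw [Module.End.mem_eigenspace_iff, one_smul]
      funext c
      cases c with
      | inl a =>
        rw [hLinl, hembl]
        fin_cases a
        · simpa [hembr] using hφv
        · simpa [hembr] using hφbv
      | inr i =>
        rw [hLinr, hembl, hembl, hembr]
        have := congrFun hv i
        rw [haEnd] at this
        simpa [hembr] using this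
    · intro hm
      rw [Module.End.mem_eigenspace_iff, one_smul] at hm
      rw [Module.End.mem_eigenspace_iff, one_smul]
      funext i
      have := congrFun hm (Sum.inr i)
      rw [hLinr, hembl, hembl, hembr] at this
      rw [haEnd]
      simpa [hembr] using this
  -- comap characterization for eigenvalue 0
  have hcomap0 : Module.End.eigenspace (S.aEnd f p) 0
      = Submodule.comap (tangentEmb n) (Module.End.eigenspace (S.LEnd f p) 0) := by
    ext v
    rw [Submodule.mem_comap]
    constructor
    · intro hm
      obtain ⟨hφv, hφbv⟩ := hv0E v hm
      rw [dotL_apply] at hφv hφbv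
      have hv : S.aEnd f p v = 0 := by
        have := Module.End.mem_eigenspace_iff.mp hm
        rwa [zero_smul] at this
      rw [Module.End.mem_eigenspace_iff, zero_smul]
      funext c
      cases c with
      | inl a =>
        rw [hLinl, hembl]
        fin_cases a
        · simpa [hembr] using hφv
        · simpa [hembr] using hφbv
      | inr i =>
        rw [hLinr, hembl, hembl]
        have := congrFun hv i
        rw [haEnd] at this
        simpa [hembr] using this
    · intro hm
      rw [Module.End.mem_eigenspace_iff, zero_smul] at hm
      rw [Module.End.mem_eigenspace_iff, zero_smul]
      funext i
      have := congrFun hm (Sum.inr i)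
      rw [hLinr, hembl, hembl] at this
      rw [haEnd]
      simpa [hembr] using this
  -- auxiliary sums for the special eigenvectors
  have hs1 : (∑ j, S.D0 f p j * ((S.muF f p)⁻¹ * S.raise1 p (S.D0 f p) j))
      = 1 - S.muF f p := by
    have h : (∑ j, S.D0 f p j * ((S.muF f p)⁻¹ * S.raise1 p (S.D0 f p) j))
        = (S.muF f p)⁻¹ * ∑ j, S.D0 f p j * S.raise1 p (S.D0 f p) j := by
      rw [Finset.mul_sum]
      exact Finset.sum_congr rfl fun j _ => by ring
    rw [h, h00, inv_mul_cancel_left₀ hμne]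
  have hs2 : (∑ j, S.fbar f p j * ((S.muF f p)⁻¹ * S.raise1 p (S.D0 f p) j)) = 0 := by
    have h : (∑ j, S.fbar f p j * ((S.muF f p)⁻¹ * S.raise1 p (S.D0 f p) j))
        = (S.muF f p)⁻¹ * ∑ j, S.fbar f p j * S.raise1 p (S.D0 f p) j := by
      rw [Finset.mul_sum]
      exact Finset.sum_congr rfl fun j _ => by ring
    rw [h, h10, mul_zero]
  have hs1b : (∑ j, S.D0 f p j * ((S.muF f p)⁻¹ * S.raise1 p (S.fbar f p) j)) = 0 := by
    have h : (∑ j, S.D0 f p j * ((S.muF f p)⁻¹ * S.raise1 p (S.fbar f p) j))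
        = (S.muF f p)⁻¹ * ∑ j, S.D0 f p j * S.raise1 p (S.fbar f p) j := by
      rw [Finset.mul_sum]
      exact Finset.sum_congr rfl fun j _ => by ring
    rw [h, h01, mul_zero]
  have hs2b : (∑ j, S.fbar f p j * ((S.muF f p)⁻¹ * S.raise1 p (S.fbar f p) j))
      = 1 - S.muF f p := by
    have h : (∑ j, S.fbar f p j * ((S.muF f p)⁻¹ * S.raise1 p (S.fbar f p) j))
        = (S.muF f p)⁻¹ * ∑ j, S.fbar f p j * S.raise1 p (S.fbar f p) j := by
      rw [Finset.mul_sum]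
      exact Finset.sum_congr rfl fun j _ => by ring
    rw [h, h11, inv_mul_cancel_left₀ hμne]
  have hs3 : ∀ i, (∑ j, S.aUp f p i j * ((S.muF f p)⁻¹ * S.raise1 p (S.D0 f p) j))
      = (S.muF f p)⁻¹ * ((1 - S.muF f p) * S.raise1 p (S.D0 f p) i) := by
    intro i
    have h : (∑ j, S.aUp f p i j * ((S.muF f p)⁻¹ * S.raise1 p (S.D0 f p) j))
        = (S.muF f p)⁻¹ * ∑ j, S.aUp f p i j * S.raise1 p (S.D0 f p) j := by
      rw [Finset.mul_sum]
      exact Finset.sum_congr rfl fun j _ => by ring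
    rw [h, hAF i]
  have hs3b : ∀ i, (∑ j, S.aUp f p i j * ((S.muF f p)⁻¹ * S.raise1 p (S.fbar f p) j))
      = (S.muF f p)⁻¹ * ((1 - S.muF f p) * S.raise1 p (S.fbar f p) i) := by
    intro i
    have h : (∑ j, S.aUp f p i j * ((S.muF f p)⁻¹ * S.raise1 p (S.fbar f p) j))
        = (S.muF f p)⁻¹ * ∑ j, S.aUp f p i j * S.raise1 p (S.fbar f p) j := by
      rw [Finset.mul_sum]
      exact Finset.sum_congr rfl fun j _ => by ring
    rw [h, hAFb i]
  -- special eigenvectors of L(f) with eigenvalue 1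
  set u0 : Fin 2 ⊕ Fin (2*n) → ℝ := Sum.elim (fun a => if a = 0 then (1:ℝ) else 0)
      (fun i => (S.muF f p)⁻¹ * S.raise1 p (S.D0 f p) i) with hu0def
  set u1 : Fin 2 ⊕ Fin (2*n) → ℝ := Sum.elim (fun a => if a = 0 then (0:ℝ) else 1)
      (fun i => (S.muF f p)⁻¹ * S.raise1 p (S.fbar f p) i) with hu1def
  have hu0mem : u0 ∈ Module.End.eigenspace (S.LEnd f p) 1 := by
    rw [Module.End.mem_eigenspace_iff, one_smul]
    funext c
    cases c with
    | inl a =>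
      rw [hLinl, hu0def]
      simp only [Sum.elim_inl, Sum.elim_inr]
      fin_cases a
      · norm_num
        rw [hs1]
        ring
      · norm_num
        exact hs2
    | inr i =>
      rw [hLinr, hu0def]
      simp only [Sum.elim_inl, Sum.elim_inr]
      norm_num
      rw [hs3 i]
      field_simp
      ring
  have hu1mem : u1 ∈ Module.End.eigenspace (S.LEnd f p) 1 := by
    rw [Module.End.mem_eigenspace_iff, one_smul]
    funext c
    cases c with
    | inl a =>
      rw [hLinl, hu1def]
      simp only [Sum.elim_inl, Sum.elim_inr]
      fin_cases a
      · norm_num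
        exact hs1b
      · norm_num
        rw [hs2b]
        ring
    | inr i =>
      rw [hLinr, hu1def]
      simp only [Sum.elim_inl, Sum.elim_inr]
      norm_num
      rw [hs3b i]
      field_simp
      ring
  have hinj : Function.Injective (tangentEmb n) := by
    intro x y h
    funext j
    exact congrFun h (Sum.inr j)
  have hle1 : Submodule.map (tangentEmb n) (Module.End.eigenspace (S.aEnd f p) 1)
      ≤ Module.End.eigenspace (S.LEnd f p) 1 :=
    Submodule.map_le_iff_le_comap.mpr (le_of_eq hcomap1)
  have heqE1 : Module.End.eigenspace (S.LEnd f p) 1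
      = Submodule.map (tangentEmb n) (Module.End.eigenspace (S.aEnd f p) 1)
        ⊔ Submodule.span ℝ ({u0, u1} : Set (Fin 2 ⊕ Fin (2*n) → ℝ)) := by
    apply le_antisymm
    · intro u hu
      have hw : u - u (Sum.inl 0) • u0 - u (Sum.inl 1) • u1
          ∈ Module.End.eigenspace (S.LEnd f p) 1 :=
        Submodule.sub_mem _ (Submodule.sub_mem _ hu (Submodule.smul_mem _ _ hu0mem))
          (Submodule.smul_mem _ _ hu1mem)
      set w := u - u (Sum.inl 0) • u0 - u (Sum.inl 1) • u1 with hwdef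
      have hwemb : w = tangentEmb n (fun j => w (Sum.inr j)) := by
        funext c
        cases c with
        | inl a =>
          rw [hembl]
          rw [hwdef]
          fin_cases a <;> simp [hu0def, hu1def]
        | inr j => rfl
      have hvmem : (fun j => w (Sum.inr j)) ∈ Module.End.eigenspace (S.aEnd f p) 1 := by
        rw [hcomap1, Submodule.mem_comap, ← hwemb]
        exact hw
      have hudecomp : u = tangentEmb n (fun j => w (Sum.inr j))
          + (u (Sum.inl 0) • u0 + u (Sum.inl 1) • u1) := by
        rw [← hwemb, hwdef]
        abel
      rw [hudecomp]
      exact Submodule.add_mem _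
        (Submodule.mem_sup_left (Submodule.mem_map_of_mem hvmem))
        (Submodule.mem_sup_right (Submodule.add_mem _
          (Submodule.smul_mem _ _ (Submodule.subset_span (Set.mem_insert _ _)))
          (Submodule.smul_mem _ _ (Submodule.subset_span
            (Set.mem_insert_of_mem _ rfl)))))
    · refine sup_le hle1 ?_
      rw [Submodule.span_le]
      rintro x (rfl | rfl)
      · exact hu0mem
      · exact hu1mem
  have hspan2 : Module.finrank ℝ
      (Submodule.span ℝ ({u0, u1} : Set (Fin 2 ⊕ Fin (2*n) → ℝ))) = 2 := by
    apply span_pair_finrank_two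
    intro a b hab
    constructor
    · have := congrFun hab (Sum.inl 0)
      simpa [hu0def, hu1def] using this
    · have := congrFun hab (Sum.inl 1)
      simpa [hu0def, hu1def] using this
  have hdisjE1 : Submodule.map (tangentEmb n) (Module.End.eigenspace (S.aEnd f p) 1)
      ⊓ Submodule.span ℝ ({u0, u1} : Set (Fin 2 ⊕ Fin (2*n) → ℝ)) = ⊥ := by
    rw [eq_bot_iff]
    intro x hx
    obtain ⟨hx1, hx2⟩ := Submodule.mem_inf.mp hx
    obtain ⟨v, hv, rfl⟩ := hx1
    obtain ⟨a, b, hab⟩ := Submodule.mem_span_pair.mp hx2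
    have ha : a = 0 := by
      have := congrFun hab (Sum.inl 0)
      simpa [hu0def, hu1def, hembl] using this
    have hb : b = 0 := by
      have := congrFun hab (Sum.inl 1)
      simpa [hu0def, hu1def, hembl] using this
    rw [Submodule.mem_bot, ← hab, ha, hb, zero_smul, zero_smul, add_zero]
  have hfrmap : Module.finrank ℝ (Submodule.map (tangentEmb n)
      (Module.End.eigenspace (S.aEnd f p) 1))
      = Module.finrank ℝ (Module.End.eigenspace (S.aEnd f p) 1) :=
    (Submodule.equivMapOfInjective _ hinj _).finrank_eq.symm
  have hsum1 := Submodule.finrank_sup_add_finrank_inf_eq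
    (Submodule.map (tangentEmb n) (Module.End.eigenspace (S.aEnd f p) 1))
    (Submodule.span ℝ ({u0, u1} : Set (Fin 2 ⊕ Fin (2*n) → ℝ)))
  rw [hdisjE1, finrank_bot, add_zero, ← heqE1, hk, hfrmap, hspan2] at hsum1
  have hd1 : Module.finrank ℝ (Module.End.eigenspace (S.aEnd f p) 1) = 2 * k := by omega
  have htotal : Module.finrank ℝ (Fin (2*n) → ℝ) = 2 * n := Module.finrank_fin_fun ℝ
  rw [htotal] at hcount
  have hd0 : Module.finrank ℝ (Module.End.eigenspace (S.aEnd f p) 0)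
      = 2 * n - 2 * k - 2 := by omega
  exact ⟨heig, hcomap1, hcomap0, hd1, hd0, hspan, hfr2, htop⟩
end
end
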